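/- For any p square row-stochastic matrices Q[1],...,Q[p] of the same size, δ(Q[1]Q[2]···Q[p]) ≤ Π_{k=1}^p λ(Q[k]), where δ(A) := max_j max_{i1,i2} |A_{i1,j} - A_{i2,j}| and λ(A) := 1 - min_{i1,i2} Σ_j min(A_{i1,j}, A_{i2,j}). -/

import Mathlib

open Matrix Finset

noncomputable def ergDelta {n : ℕ} (Q : Matrix (Fin n) (Fin n) ℝ) : ℝ :=
  ⨆ j, ⨆ i1, ⨆ i2, |Q i1 j - Q i2 j|

noncomputable def ergLambda {n : ℕ} (Q : Matrix (Fin n) (Fin n) ℝ) : ℝ :=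
  1 - ⨅ i1, ⨅ i2, ∑ j, min (Q i1 j) (Q i2 j)

def RowStochastic {n : ℕ} (Q : Matrix (Fin n) (Fin n) ℝ) : Prop :=
  (∀ i j, 0 ≤ Q i j) ∧ ∀ i, ∑ j, Q i j = 1

section aux
variable {n : ℕ}

lemma abs_le_ergDelta (Q : Matrix (Fin n) (Fin n) ℝ) (i1 i2 j : Fin n) :
    |Q i1 j - Q i2 j| ≤ ergDelta Q := by
  rw [ergDelta]
  calc |Q i1 j - Q i2 j| ≤ ⨆ i2, |Q i1 j - Q i2 j| :=
        le_ciSup (f := fun i2 => |Q i1 j - Q i2 j|)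
          (Set.Finite.bddAbove (Set.finite_range _)) i2
    _ ≤ ⨆ i1, ⨆ i2, |Q i1 j - Q i2 j| :=
        le_ciSup (f := fun i1 => ⨆ i2, |Q i1 j - Q i2 j|)
          (Set.Finite.bddAbove (Set.finite_range _)) i1
    _ ≤ ⨆ j, ⨆ i1, ⨆ i2, |Q i1 j - Q i2 j| :=
        le_ciSup (f := fun j => ⨆ i1, ⨆ i2, |Q i1 j - Q i2 j|)
          (Set.Finite.bddAbove (Set.finite_range _)) j

lemma ergDelta_le (hn : 0 < n) (Q : Matrix (Fin n) (Fin n) ℝ) {c : ℝ}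
    (h : ∀ j i1 i2, |Q i1 j - Q i2 j| ≤ c) : ergDelta Q ≤ c := by
  haveI : Nonempty (Fin n) := ⟨⟨0, hn⟩⟩
  exact ciSup_le fun j => ciSup_le fun i1 => ciSup_le fun i2 => h j i1 i2

lemma ergDelta_nonneg (hn : 0 < n) (Q : Matrix (Fin n) (Fin n) ℝ) : 0 ≤ ergDelta Q := by
  have i : Fin n := ⟨0, hn⟩
  have := abs_le_ergDelta Q i i i
  simpa using this

lemma sum_posPart_le_ergLambda {A : Matrix (Fin n) (Fin n) ℝ} (hA : RowStochastic A)
    (i1 i2 : Fin n) : ∑ k, max (A i1 k - A i2 k) 0 ≤ ergLambda A := by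
  have h1 : ∑ k, max (A i1 k - A i2 k) 0 = 1 - ∑ k, min (A i1 k) (A i2 k) := by
    rw [← hA.2 i1, ← Finset.sum_sub_distrib]
    apply Finset.sum_congr rfl
    intro k _
    rcases le_total (A i1 k) (A i2 k) with h | h <;> simp [max_eq_left, max_eq_right, min_eq_left, min_eq_right, h]
  rw [h1, ergLambda]
  have h2 : (⨅ i1, ⨅ i2, ∑ j, min (A i1 j) (A i2 j)) ≤ ∑ j, min (A i1 j) (A i2 j) := by
    calc (⨅ i1, ⨅ i2, ∑ j, min (A i1 j) (A i2 j)) ≤ ⨅ i2, ∑ j, min (A i1 j) (A i2 j) :=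
          ciInf_le (Set.Finite.bddBelow (Set.finite_range _)) i1
      _ ≤ ∑ j, min (A i1 j) (A i2 j) := ciInf_le (Set.Finite.bddBelow (Set.finite_range _)) i2
  linarith

lemma ergLambda_nonneg (hn : 0 < n) {A : Matrix (Fin n) (Fin n) ℝ} (hA : RowStochastic A) :
    0 ≤ ergLambda A := by
  have i : Fin n := ⟨0, hn⟩
  have := sum_posPart_le_ergLambda hA i i
  have h0 : (0:ℝ) ≤ ∑ k, max (A i k - A i k) 0 := Finset.sum_nonneg fun k _ => le_max_right _ _
  linarith

lemma mul_rowStochastic {A B : Matrix (Fin n) (Fin n) ℝ} (hA : RowStochastic A)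
    (hB : RowStochastic B) : RowStochastic (A * B) := by
  constructor
  · intro i j
    rw [Matrix.mul_apply]
    exact Finset.sum_nonneg fun k _ => mul_nonneg (hA.1 i k) (hB.1 k j)
  · intro i
    simp only [Matrix.mul_apply]
    rw [Finset.sum_comm]
    calc ∑ k, ∑ j, A i k * B k j = ∑ k, A i k * ∑ j, B k j := by
          simp [Finset.mul_sum]
      _ = 1 := by simp only [hB.2]; simpa using hA.2 i

lemma key (hn : 0 < n) {A B : Matrix (Fin n) (Fin n) ℝ} (hA : RowStochastic A)
    (hB : RowStochastic B) : ergDelta (A * B) ≤ ergLambda A * ergDelta B := by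
  haveI : Nonempty (Fin n) := ⟨⟨0, hn⟩⟩
  have main : ∀ j i1 i2, (A * B) i1 j - (A * B) i2 j ≤ ergLambda A * ergDelta B := by
    intro j i1 i2
    obtain ⟨k0, -, hk0⟩ := Finset.exists_min_image Finset.univ (fun k => B k j)
      Finset.univ_nonempty
    have hsum0 : ∑ k, (A i1 k - A i2 k) = 0 := by
      rw [Finset.sum_sub_distrib, hA.2, hA.2]; ring
    have hrw : (A * B) i1 j - (A * B) i2 j
        = ∑ k, (A i1 k - A i2 k) * (B k j - B k0 j) := by
      simp only [Matrix.mul_apply]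
      rw [← Finset.sum_sub_distrib]
      have : ∑ k, (A i1 k - A i2 k) * (B k j - B k0 j)
          = ∑ k, ((A i1 k - A i2 k) * B k j) - (∑ k, (A i1 k - A i2 k)) * B k0 j := by
        rw [Finset.sum_mul, ← Finset.sum_sub_distrib]
        apply Finset.sum_congr rfl; intro k _; ring
      rw [this, hsum0]
      simp [sub_mul]
    rw [hrw]
    have step1 : ∑ k, (A i1 k - A i2 k) * (B k j - B k0 j)
        ≤ ∑ k, max (A i1 k - A i2 k) 0 * ergDelta B := by
      apply Finset.sum_le_sum
      intro k _
      have hx0 : 0 ≤ B k j - B k0 j := by have := hk0 k (Finset.mem_univ k); linarith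
      have hxd : B k j - B k0 j ≤ ergDelta B := by
        have := abs_le_ergDelta B k k0 j
        have habs : B k j - B k0 j ≤ |B k j - B k0 j| := le_abs_self _
        linarith
      rcases le_or_gt 0 (A i1 k - A i2 k) with h | h
      · rw [max_eq_left h]
        exact mul_le_mul_of_nonneg_left hxd h
      · rw [max_eq_right h.le]
        have : (A i1 k - A i2 k) * (B k j - B k0 j) ≤ 0 :=
          mul_nonpos_of_nonpos_of_nonneg h.le hx0
        simpa using this
    have step2 : ∑ k, max (A i1 k - A i2 k) 0 * ergDelta B
        ≤ ergLambda A * ergDelta B := by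
      rw [← Finset.sum_mul]
      exact mul_le_mul_of_nonneg_right (sum_posPart_le_ergLambda hA i1 i2)
        (ergDelta_nonneg hn B)
    linarith
  apply ergDelta_le hn
  intro j i1 i2
  rw [abs_sub_le_iff]
  exact ⟨main j i1 i2, main j i2 i1⟩

lemma list_prod_rowStochastic (L : List (Matrix (Fin n) (Fin n) ℝ))
    (hL : ∀ A ∈ L, RowStochastic A) : RowStochastic L.prod := by
  induction L with
  | nil => exact ⟨fun i j => by simp [Matrix.one_apply]; split <;> norm_num,
      fun i => by simp [Matrix.one_apply]⟩
  | cons C L ih =>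
    rw [List.prod_cons]
    exact mul_rowStochastic (hL C List.mem_cons_self)
      (ih fun B hB => hL B (List.mem_cons_of_mem _ hB))

lemma list_lem (hn : 0 < n) (L : List (Matrix (Fin n) (Fin n) ℝ))
    (hL : ∀ A ∈ L, RowStochastic A) :
    ergDelta L.prod ≤ (L.map ergLambda).prod := by
  induction L with
  | nil =>
    simp only [List.prod_nil, List.map_nil]
    apply ergDelta_le hn
    intro j i1 i2
    by_cases h1 : i1 = j <;> by_cases h2 : i2 = j <;>
      simp [Matrix.one_apply, h1, h2]
  | cons A L ih =>
    have hA : RowStochastic A := hL A List.mem_cons_self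
    have hL' : ∀ B ∈ L, RowStochastic B := fun B hB => hL B (List.mem_cons_of_mem _ hB)
    have hProd : RowStochastic L.prod := list_prod_rowStochastic L hL'
    simp only [List.prod_cons, List.map_cons]
    calc ergDelta (A * L.prod) ≤ ergLambda A * ergDelta L.prod := key hn hA hProd
      _ ≤ ergLambda A * (L.map ergLambda).prod :=
          mul_le_mul_of_nonneg_left (ih hL') (ergLambda_nonneg hn hA)

end aux

theorem stmt1 {n p : ℕ} (hn : 0 < n) (Q : Fin p → Matrix (Fin n) (Fin n) ℝ)
    (hQ : ∀ k, RowStochastic (Q k)) :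
    ergDelta (List.ofFn Q).prod ≤ ∏ k : Fin p, ergLambda (Q k) := by
  have h := list_lem hn (List.ofFn Q) (by
    intro A hA
    rw [List.mem_ofFn] at hA
    obtain ⟨k, rfl⟩ := hA
    exact hQ k)
  calc ergDelta (List.ofFn Q).prod ≤ ((List.ofFn Q).map ergLambda).prod := h
    _ = ∏ k : Fin p, ergLambda (Q k) := by
        rw [List.map_ofFn, List.prod_ofFn]; rfl
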